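/- For an irreducible Markov chain (X,P), the spectral radius ρ(P) equals the minimum over all t > 0 such that there exists a strictly positive function f : X → ℝ with Pf(x) ≤ t·f(x) for all x ∈ X (where Pf(x) = ∑_y p(x,y) f(y)). -/

import Mathlib

open Filter
open scoped Classical
open scoped Topology

/-- `n`-step transition probabilities of a kernel `q` on a countable state space. -/
noncomputable def kpow {X : Type*} (q : X → X → ℝ) : ℕ → X → X → ℝ
  | 0, x, y => if x = y then 1 else 0
  | n + 1, x, y => ∑' z : X, q x z * kpow q n z y

/-- The spectral radius `ρ(P) = limsup_n (p^{(n)}(x,x))^{1/n}` (computed at base point `x`). -/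
noncomputable def specRad {X : Type*} (q : X → X → ℝ) (x : X) : ℝ :=
  Filter.atTop.limsup fun n : ℕ => (kpow q n x x) ^ ((n : ℝ)⁻¹)

section Aux

/-- Fubini for iterated nonnegative real sums. -/
lemma tsum_swap_nonneg {A B : Type*} {f : A → B → ℝ} (h0 : ∀ a b, 0 ≤ f a b)
    (h1 : ∀ a, Summable (f a)) (h2 : Summable fun a => ∑' b, f a b) :
    (∀ b, Summable fun a => f a b) ∧ (Summable fun b => ∑' a, f a b) ∧
      (∑' b, ∑' a, f a b) = ∑' a, ∑' b, f a b := by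
  have hu : Summable (Function.uncurry f) :=
    (summable_prod_of_nonneg (fun q => h0 q.1 q.2)).2 ⟨h1, h2⟩
  have hu' : Summable (fun q : B × A => f q.2 q.1) := hu.prod_symm
  have h3 := (summable_prod_of_nonneg (f := fun q : B × A => f q.2 q.1)
      (fun q => h0 q.2 q.1)).1 hu'
  exact ⟨h3.1, h3.2, Summable.tsum_comm' hu h1 h3.1⟩

variable {X : Type*} {p : X → X → ℝ}

lemma kpow_zero (x y : X) : kpow p 0 x y = if x = y then 1 else 0 := rfl

lemma kpow_succ (n : ℕ) (x y : X) : kpow p (n + 1) x y = ∑' z : X, p x z * kpow p n z y := rfl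

lemma kpow_nonneg (hnonneg : ∀ x y, 0 ≤ p x y) (n : ℕ) (x y : X) : 0 ≤ kpow p n x y := by
  induction n generalizing x y with
  | zero => rw [kpow_zero]; split <;> norm_num
  | succ n ih => exact tsum_nonneg fun z => mul_nonneg (hnonneg x z) (ih z y)

section S

variable (hnonneg : ∀ x y, 0 ≤ p x y) (hstoch : ∀ x, HasSum (p x) 1)
include hnonneg hstoch

lemma kpow_row (n : ℕ) (x : X) :
    Summable (kpow p n x) ∧ ∑' y, kpow p n x y = 1 := by
  induction n generalizing x with
  | zero =>
    have h : HasSum (kpow p 0 x) 1 := by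
      have := hasSum_ite_eq x (1 : ℝ)
      refine this.congr_fun fun y => ?_
      rw [kpow_zero]
      simp [eq_comm]
    exact ⟨h.summable, h.tsum_eq⟩
  | succ n ih =>
    have h1 : ∀ z, Summable fun y => p x z * kpow p n z y :=
      fun z => ((ih z).1).mul_left _
    have h2e : (fun z => ∑' y, p x z * kpow p n z y) = p x := by
      funext z
      rw [tsum_mul_left, (ih z).2, mul_one]
    have h2 : Summable fun z => ∑' y, p x z * kpow p n z y := by
      rw [h2e]; exact (hstoch x).summable
    obtain ⟨hs1, hs2, heq⟩ := tsum_swap_nonneg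
      (f := fun z y => p x z * kpow p n z y)
      (fun z y => mul_nonneg (hnonneg x z) (kpow_nonneg hnonneg n z y)) h1 h2
    constructor
    · exact hs2.congr fun y => (kpow_succ n x y).symm
    · calc ∑' y, kpow p (n+1) x y = ∑' y, ∑' z, p x z * kpow p n z y := by
            exact tsum_congr fun y => kpow_succ n x y
        _ = ∑' z, ∑' y, p x z * kpow p n z y := heq
        _ = 1 := by rw [h2e]; exact (hstoch x).tsum_eq

lemma kpow_summable (n : ℕ) (x : X) : Summable (kpow p n x) :=
  (kpow_row hnonneg hstoch n x).1

lemma kpow_le_one (n : ℕ) (x y : X) : kpow p n x y ≤ 1 := by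
  have := Summable.le_tsum (kpow_summable hnonneg hstoch n x) y
    (fun j _ => kpow_nonneg hnonneg n x j)
  rwa [(kpow_row hnonneg hstoch n x).2] at this

lemma kpow_mul_summable (m n : ℕ) (x y : X) :
    Summable fun z => kpow p m x z * kpow p n z y := by
  refine Summable.of_nonneg_of_le
    (fun z => mul_nonneg (kpow_nonneg hnonneg m x z) (kpow_nonneg hnonneg n z y))
    (fun z => mul_le_of_le_one_right (kpow_nonneg hnonneg m x z)
      (kpow_le_one hnonneg hstoch n z y))
    (kpow_summable hnonneg hstoch m x)

lemma kpow_add (m n : ℕ) (x y : X) :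
    kpow p (m + n) x y = ∑' z, kpow p m x z * kpow p n z y := by
  induction m generalizing x with
  | zero =>
    rw [zero_add]
    rw [tsum_eq_single x ?_]
    · rw [kpow_zero, if_pos rfl, one_mul]
    · intro z hz
      rw [kpow_zero, if_neg (Ne.symm hz), zero_mul]
  | succ m ih =>
    have key : kpow p (m + 1 + n) x y = kpow p ((m + n) + 1) x y := by
      congr 1; omega
    set f : X → X → ℝ := fun z w => (p x z * kpow p m z w) * kpow p n w y with hf
    have h0 : ∀ z w, 0 ≤ f z w := fun z w =>
      mul_nonneg (mul_nonneg (hnonneg x z) (kpow_nonneg hnonneg m z w))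
        (kpow_nonneg hnonneg n w y)
    have h1 : ∀ z, Summable (f z) := by
      intro z
      have := (kpow_mul_summable hnonneg hstoch m n z y).mul_left (p x z)
      exact this.congr fun w => by rw [hf]; ring
    have h1e : ∀ z, ∑' w, f z w = p x z * kpow p (m + n) z y := by
      intro z
      have : ∑' w, f z w = ∑' w, p x z * (kpow p m z w * kpow p n w y) := by
        exact tsum_congr fun w => by rw [hf]; ring
      rw [this, tsum_mul_left, ← ih z]
    have h2 : Summable fun z => ∑' w, f z w := by
      refine Summable.congr ?_ (fun z => (h1e z).symm)
      refine Summable.of_nonneg_of_le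
        (fun z => mul_nonneg (hnonneg x z) (kpow_nonneg hnonneg (m+n) z y))
        (fun z => mul_le_of_le_one_right (hnonneg x z) (kpow_le_one hnonneg hstoch (m+n) z y))
        (hstoch x).summable
    obtain ⟨hs1, hs2, heq⟩ := tsum_swap_nonneg h0 h1 h2
    calc kpow p (m + 1 + n) x y = ∑' z, p x z * kpow p (m + n) z y := by
          rw [key, kpow_succ]
      _ = ∑' z, ∑' w, f z w := tsum_congr fun z => (h1e z).symm
      _ = ∑' w, ∑' z, f z w := heq.symm
      _ = ∑' w, kpow p (m+1) x w * kpow p n w y := by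
          refine tsum_congr fun w => ?_
          rw [kpow_succ, ← tsum_mul_right]

lemma kpow_add_ge (m n : ℕ) (x z y : X) :
    kpow p m x z * kpow p n z y ≤ kpow p (m + n) x y := by
  rw [kpow_add hnonneg hstoch m n x y]
  exact Summable.le_tsum (kpow_mul_summable hnonneg hstoch m n x y) z
    (fun w _ => mul_nonneg (kpow_nonneg hnonneg m x w) (kpow_nonneg hnonneg n w y))

omit hstoch in
/-- iteration of the superharmonic inequality -/
lemma superharm_iter {f : X → ℝ} {t : ℝ} (ht : 0 ≤ t) (hfnn : ∀ x, 0 ≤ f x)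
    (hsum : ∀ x, Summable fun y => p x y * f y)
    (hineq : ∀ x, (∑' y, p x y * f y) ≤ t * f x) (n : ℕ) (x : X) :
    (Summable fun y => kpow p n x y * f y) ∧ (∑' y, kpow p n x y * f y) ≤ t ^ n * f x := by
  induction n generalizing x with
  | zero =>
    have he : (fun y => kpow p 0 x y * f y) = fun y => if y = x then f x else 0 := by
      funext y
      rw [kpow_zero]
      by_cases h : x = y
      · subst h; simp
      · simp [h, Ne.symm h]
    rw [he]
    refine ⟨(hasSum_ite_eq x (f x)).summable, ?_⟩
    rw [(hasSum_ite_eq x (f x)).tsum_eq, pow_zero, one_mul]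
  | succ n ih =>
    set g : X → X → ℝ := fun z y => (p x z * kpow p n z y) * f y with hg
    have h0 : ∀ z y, 0 ≤ g z y := fun z y =>
      mul_nonneg (mul_nonneg (hnonneg x z) (kpow_nonneg hnonneg n z y)) (hfnn y)
    have h1 : ∀ z, Summable (g z) := by
      intro z
      have := ((ih z).1).mul_left (p x z)
      exact this.congr fun y => by rw [hg]; ring
    have h1e : ∀ z, ∑' y, g z y = p x z * ∑' y, kpow p n z y * f y := by
      intro z
      rw [show (fun y => g z y) = fun y => p x z * (kpow p n z y * f y) from
        funext fun y => by rw [hg]; ring, tsum_mul_left]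
    have hB : Summable fun z => t ^ n * (p x z * f z) := (hsum x).mul_left _
    have hle : ∀ z, (∑' y, g z y) ≤ t ^ n * (p x z * f z) := by
      intro z
      rw [h1e z]
      calc p x z * ∑' y, kpow p n z y * f y ≤ p x z * (t ^ n * f z) :=
            mul_le_mul_of_nonneg_left (ih z).2 (hnonneg x z)
        _ = t ^ n * (p x z * f z) := by ring
    have h2 : Summable fun z => ∑' y, g z y :=
      Summable.of_nonneg_of_le
        (fun z => tsum_nonneg fun y => h0 z y) hle hB
    obtain ⟨hs1, hs2, heq⟩ := tsum_swap_nonneg h0 h1 h2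
    have hrw : (fun y => kpow p (n+1) x y * f y) = fun y => ∑' z, g z y := by
      funext y
      rw [kpow_succ, ← tsum_mul_right]
    constructor
    · rw [hrw]; exact hs2
    · calc (∑' y, kpow p (n+1) x y * f y) = ∑' y, ∑' z, g z y := by rw [hrw]
        _ = ∑' z, ∑' y, g z y := heq
        _ ≤ ∑' z, t ^ n * (p x z * f z) := Summable.tsum_le_tsum hle h2 hB
        _ = t ^ n * ∑' z, p x z * f z := tsum_mul_left
        _ ≤ t ^ n * (t * f x) :=
            mul_le_mul_of_nonneg_left (hineq x) (pow_nonneg ht n)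
        _ = t ^ (n+1) * f x := by ring

omit hstoch in
lemma specA_nonneg (o : X) (n : ℕ) : 0 ≤ (kpow p n o o) ^ ((n : ℝ)⁻¹) :=
  Real.rpow_nonneg (kpow_nonneg hnonneg n o o) _

lemma specA_le_one (o : X) (n : ℕ) : (kpow p n o o) ^ ((n : ℝ)⁻¹) ≤ 1 :=
  Real.rpow_le_one (kpow_nonneg hnonneg n o o) (kpow_le_one hnonneg hstoch n o o)
    (by positivity)

lemma specA_bdd (o : X) :
    IsBoundedUnder (· ≤ ·) atTop fun n : ℕ => (kpow p n o o) ^ ((n : ℝ)⁻¹) :=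
  isBoundedUnder_of ⟨1, fun n => specA_le_one hnonneg hstoch o n⟩

omit hstoch in
lemma specA_cobdd (o : X) :
    IsCoboundedUnder (· ≤ ·) atTop fun n : ℕ => (kpow p n o o) ^ ((n : ℝ)⁻¹) :=
  isCoboundedUnder_le_of_le atTop fun n => specA_nonneg hnonneg o n

lemma specRad_nonneg (o : X) : 0 ≤ specRad p o := by
  refine le_limsup_of_frequently_le (Frequently.of_forall fun n => ?_)
    (specA_bdd hnonneg hstoch o)
  exact specA_nonneg hnonneg o n

/-- the lower-bound part: any t in the set dominates specRad -/
lemma specRad_le_superharm (o : X) {t : ℝ} (ht : 0 < t) {f : X → ℝ}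
    (hfpos : ∀ x, 0 < f x) (hsum : ∀ x, Summable fun y => p x y * f y)
    (hineq : ∀ x, (∑' y, p x y * f y) ≤ t * f x) : specRad p o ≤ t := by
  have hkp : ∀ n : ℕ, kpow p n o o ≤ t ^ n := by
    intro n
    obtain ⟨hs, hle⟩ := superharm_iter hnonneg ht.le (fun x => (hfpos x).le) hsum hineq n o
    have h1 : kpow p n o o * f o ≤ t ^ n * f o := by
      refine le_trans ?_ hle
      exact Summable.le_tsum hs o fun j _ =>
        mul_nonneg (kpow_nonneg hnonneg n o j) (hfpos j).le
    exact le_of_mul_le_mul_right h1 (hfpos o)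
  refine limsup_le_of_le (specA_cobdd hnonneg o) ?_
  filter_upwards [eventually_ge_atTop 1] with n hn
  have hn0 : (n : ℝ) ≠ 0 := Nat.cast_ne_zero.mpr (by omega)
  calc (kpow p n o o) ^ ((n : ℝ)⁻¹) ≤ (t ^ n) ^ ((n : ℝ)⁻¹) :=
        Real.rpow_le_rpow (kpow_nonneg hnonneg n o o) (hkp n) (by positivity)
    _ = t := by
        rw [← Real.rpow_natCast t n, ← Real.rpow_mul ht.le, mul_inv_cancel₀ hn0,
          Real.rpow_one]

lemma specRad_pos (hirred : ∀ x y, ∃ k : ℕ, 0 < kpow p k x y) (o : X) : 0 < specRad p o := by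
  obtain ⟨y, hy⟩ : ∃ y, 0 < p o y := by
    by_contra h
    push_neg at h
    have hz : ∀ y, p o y = 0 := fun y => le_antisymm (h y) (hnonneg o y)
    have : (1 : ℝ) = 0 := by
      have h0 : HasSum (p o) 0 := by
        rw [show p o = fun _ => (0:ℝ) from funext hz]
        exact hasSum_zero
      exact (hstoch o).unique h0
    norm_num at this
  obtain ⟨k, hk⟩ := hirred y o
  set K := k + 1 with hK
  have hcK : 0 < kpow p K o o := by
    have h1 : p o y * kpow p k y o ≤ kpow p K o o := by
      rw [kpow_succ]
      refine Summable.le_tsum ?_ y fun j _ =>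
        mul_nonneg (hnonneg o j) (kpow_nonneg hnonneg k j o)
      exact Summable.of_nonneg_of_le
        (fun z => mul_nonneg (hnonneg o z) (kpow_nonneg hnonneg k z o))
        (fun z => mul_le_of_le_one_right (hnonneg o z) (kpow_le_one hnonneg hstoch k z o))
        (hstoch o).summable
    exact lt_of_lt_of_le (mul_pos hy hk) h1
  set c := kpow p K o o with hc
  have hsupm : ∀ n : ℕ, c ^ n ≤ kpow p (n * K) o o := by
    intro n
    induction n with
    | zero => simp [kpow_zero]
    | succ n ih =>
      have h2 : kpow p (n * K) o o * kpow p K o o ≤ kpow p (n * K + K) o o :=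
        kpow_add_ge hnonneg hstoch _ _ o o o
      calc c ^ (n + 1) = c ^ n * c := by ring
        _ ≤ kpow p (n * K) o o * c := by
            exact mul_le_mul_of_nonneg_right ih (le_of_lt hcK)
        _ ≤ kpow p (n * K + K) o o := h2
        _ = kpow p ((n + 1) * K) o o := by rw [Nat.succ_mul]
  set ε := c ^ ((K : ℝ)⁻¹) with hε
  have hεpos : 0 < ε := Real.rpow_pos_of_pos hcK _
  refine lt_of_lt_of_le hεpos ?_
  refine le_limsup_of_frequently_le ?_ (specA_bdd hnonneg hstoch o)
  rw [frequently_atTop]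
  intro N
  refine ⟨(N + 1) * K, ?_, ?_⟩
  · calc N ≤ N + 1 := by omega
      _ ≤ (N + 1) * K := Nat.le_mul_of_pos_right _ (by omega)
  · have h1 : c ^ (N + 1) ≤ kpow p ((N + 1) * K) o o := hsupm (N + 1)
    have hN : ((N + 1 : ℕ):ℝ) ≠ 0 := by positivity
    have hexp : ((N + 1 : ℕ):ℝ) * ((((N + 1) * K : ℕ) : ℝ))⁻¹ = ((K:ℝ))⁻¹ := by
      rw [Nat.cast_mul, mul_inv, ← mul_assoc, mul_inv_cancel₀ hN, one_mul]
    calc ε = (c ^ (N + 1)) ^ ((((N + 1) * K : ℕ) : ℝ)⁻¹) := by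
          rw [← Real.rpow_natCast c (N + 1), ← Real.rpow_mul hcK.le, hexp]
      _ ≤ (kpow p ((N + 1) * K) o o) ^ ((((N + 1) * K : ℕ) : ℝ)⁻¹) :=
          Real.rpow_le_rpow (by positivity) h1 (by positivity)

lemma green_summable_o (o : X) {t : ℝ} (hto : specRad p o < t) :
    Summable fun n : ℕ => kpow p n o o * (t⁻¹) ^ n := by
  have hρ : 0 ≤ specRad p o := specRad_nonneg hnonneg hstoch o
  have ht : 0 < t := lt_of_le_of_lt hρ hto
  set z := t⁻¹ with hzdef
  have hz : 0 < z := inv_pos.mpr ht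
  set t' := (specRad p o + t) / 2 with ht'def
  have ht'1 : specRad p o < t' := by rw [ht'def]; linarith
  have ht'2 : t' < t := by rw [ht'def]; linarith
  have ht'pos : 0 < t' := by rw [ht'def]; linarith
  have hzt : t' * z < 1 := by
    have h3 : t' * z < t * z := mul_lt_mul_of_pos_right ht'2 hz
    rwa [hzdef, mul_inv_cancel₀ ht.ne'] at h3
  have hev : ∀ᶠ n : ℕ in atTop, (kpow p n o o) ^ ((n : ℝ)⁻¹) < t' :=
    eventually_lt_of_limsup_lt ht'1 (specA_bdd hnonneg hstoch o)
  obtain ⟨N₀, hN₀⟩ := eventually_atTop.mp hev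
  set M := max N₀ 1 with hM
  have hkey : ∀ n : ℕ, kpow p (n + M) o o * z ^ (n + M) ≤ (t' * z) ^ (n + M) := by
    intro n
    have hn1 : 1 ≤ n + M := le_trans (le_max_right N₀ 1) (Nat.le_add_left M n)
    have hnN : N₀ ≤ n + M := le_trans (le_max_left N₀ 1) (Nat.le_add_left M n)
    have h1 : kpow p (n + M) o o ≤ t' ^ (n + M) := by
      have h2 := Real.rpow_inv_natCast_pow (kpow_nonneg hnonneg (n + M) o o)
        (show n + M ≠ 0 by omega)
      calc kpow p (n + M) o o
          = ((kpow p (n + M) o o) ^ (((n + M : ℕ) : ℝ)⁻¹)) ^ (n + M) := h2.symm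
        _ ≤ t' ^ (n + M) :=
            pow_le_pow_left₀ (specA_nonneg hnonneg o (n + M)) (hN₀ _ hnN).le _
    calc kpow p (n + M) o o * z ^ (n + M) ≤ t' ^ (n + M) * z ^ (n + M) :=
          mul_le_mul_of_nonneg_right h1 (by positivity)
      _ = (t' * z) ^ (n + M) := (mul_pow _ _ _).symm
  have hgeo : Summable fun n : ℕ => (t' * z) ^ (n + M) := by
    have := (summable_geometric_of_lt_one (by positivity) hzt).mul_right ((t' * z) ^ M)
    exact this.congr fun n => by rw [← pow_add]
  have hsh : Summable fun n : ℕ => kpow p (n + M) o o * z ^ (n + M) :=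
    Summable.of_nonneg_of_le
      (fun n => mul_nonneg (kpow_nonneg hnonneg _ o o) (by positivity)) hkey hgeo
  exact (summable_nat_add_iff (f := fun n : ℕ => kpow p n o o * z ^ n) M).mp hsh

lemma green_summable (o : X) {t : ℝ} (hto : specRad p o < t) {x : X} {k : ℕ}
    (hk : 0 < kpow p k o x) :
    Summable fun n : ℕ => kpow p n x o * (t⁻¹) ^ n := by
  have hρ : 0 ≤ specRad p o := specRad_nonneg hnonneg hstoch o
  have ht : 0 < t := lt_of_le_of_lt hρ hto
  set z := t⁻¹ with hzdef
  have hz : 0 < z := inv_pos.mpr ht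
  set d := kpow p k o x * z ^ k with hd
  have hdpos : 0 < d := mul_pos hk (pow_pos hz k)
  have hbd : ∀ n : ℕ, kpow p n x o * z ^ n ≤ d⁻¹ * (kpow p (n + k) o o * z ^ (n + k)) := by
    intro n
    rw [le_inv_mul_iff₀ hdpos]
    calc d * (kpow p n x o * z ^ n)
        = (kpow p k o x * kpow p n x o) * z ^ (k + n) := by rw [hd, pow_add]; ring
      _ ≤ kpow p (k + n) o o * z ^ (k + n) :=
          mul_le_mul_of_nonneg_right (kpow_add_ge hnonneg hstoch k n o x o)
            (pow_nonneg hz.le _)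
      _ = kpow p (n + k) o o * z ^ (n + k) := by rw [add_comm]
  have hsum : Summable fun n : ℕ => d⁻¹ * (kpow p (n + k) o o * z ^ (n + k)) :=
    (((summable_nat_add_iff (f := fun n : ℕ => kpow p n o o * z ^ n) k).mpr
      (green_summable_o hnonneg hstoch o hto))).mul_left _
  exact Summable.of_nonneg_of_le
    (fun n => mul_nonneg (kpow_nonneg hnonneg n x o) (pow_nonneg hz.le n)) hbd hsum

lemma green_superharm (hirred : ∀ x y, ∃ k : ℕ, 0 < kpow p k x y) (o : X) {t : ℝ}
    (hto : specRad p o < t) :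
    ∃ f : X → ℝ, (∀ x, 0 < f x) ∧ (∀ x, Summable fun y => p x y * f y) ∧
      (∀ x, (∑' y : X, p x y * f y) ≤ t * f x) := by
  have hρ : 0 ≤ specRad p o := specRad_nonneg hnonneg hstoch o
  have ht : 0 < t := lt_of_le_of_lt hρ hto
  set z := t⁻¹ with hzdef
  have hz : 0 < z := inv_pos.mpr ht
  have hzinv : z⁻¹ = t := inv_inv t
  set G : X → ℝ := fun x => ∑' n : ℕ, kpow p n x o * z ^ n with hG
  have hGsum : ∀ x, Summable fun n : ℕ => kpow p n x o * z ^ n := by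
    intro x
    obtain ⟨k, hk⟩ := hirred o x
    exact green_summable hnonneg hstoch o hto hk
  have hGpos : ∀ x, 0 < G x := by
    intro x
    obtain ⟨k, hk⟩ := hirred x o
    have h1 : kpow p k x o * z ^ k ≤ G x :=
      Summable.le_tsum (hGsum x) k fun j _ =>
        mul_nonneg (kpow_nonneg hnonneg j x o) (pow_nonneg hz.le j)
    exact lt_of_lt_of_le (mul_pos hk (pow_pos hz _)) h1
  refine ⟨G, hGpos, ?_⟩
  have main : ∀ x, (Summable fun y => p x y * G y) ∧
      (∑' y : X, p x y * G y) ≤ t * G x := by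
    intro x
    set F : ℕ → X → ℝ := fun n y => p x y * (kpow p n y o * z ^ n) with hF
    have h0 : ∀ n y, 0 ≤ F n y := fun n y =>
      mul_nonneg (hnonneg x y)
        (mul_nonneg (kpow_nonneg hnonneg n y o) (pow_nonneg hz.le n))
    have h1 : ∀ n, Summable (F n) := by
      intro n
      refine Summable.of_nonneg_of_le (h0 n) (fun y => ?_)
        ((hstoch x).summable.mul_right (z ^ n))
      rw [hF]
      exact mul_le_mul_of_nonneg_left
        (mul_le_of_le_one_left (pow_nonneg hz.le n) (kpow_le_one hnonneg hstoch n y o))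
        (hnonneg x y)
    have h1e : ∀ n, ∑' y, F n y = kpow p (n+1) x o * z ^ n := by
      intro n
      have he : ∀ y, F n y = (p x y * kpow p n y o) * z ^ n := fun y => by rw [hF]; ring
      rw [tsum_congr he, tsum_mul_right, ← kpow_succ]
    have hiden : ∀ n : ℕ, kpow p (n+1) x o * z ^ n
        = z⁻¹ * (kpow p (n+1) x o * z ^ (n+1)) := by
      intro n
      rw [pow_succ]
      field_simp
    have hsh : Summable fun n : ℕ => kpow p (n+1) x o * z ^ (n+1) :=
      (summable_nat_add_iff (f := fun n : ℕ => kpow p n x o * z ^ n) 1).mpr (hGsum x)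
    have h2 : Summable fun n => ∑' y, F n y := by
      refine Summable.congr (hsh.mul_left z⁻¹) fun n => ?_
      rw [← hiden n, h1e n]
    obtain ⟨hs1, hs2, heq⟩ := tsum_swap_nonneg h0 h1 h2
    have hpg : ∀ y, p x y * G y = ∑' n, F n y := by
      intro y
      rw [hG]
      simp only [F]
      rw [tsum_mul_left]
    constructor
    · exact hs2.congr fun y => (hpg y).symm
    · have htail : (∑' n : ℕ, kpow p (n+1) x o * z ^ (n+1)) ≤ G x := by
        have hzero := Summable.tsum_eq_zero_add (hGsum x)
        have h00 : 0 ≤ kpow p 0 x o * z ^ 0 :=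
          mul_nonneg (kpow_nonneg hnonneg 0 x o) (pow_nonneg hz.le 0)
        rw [hG]
        simp only []
        linarith [hzero]
      calc (∑' y, p x y * G y) = ∑' y, ∑' n, F n y := tsum_congr hpg
        _ = ∑' n, ∑' y, F n y := heq
        _ = ∑' n, z⁻¹ * (kpow p (n+1) x o * z ^ (n+1)) := by
            refine tsum_congr fun n => ?_
            rw [h1e n, hiden n]
        _ = z⁻¹ * ∑' n, kpow p (n+1) x o * z ^ (n+1) := tsum_mul_left
        _ ≤ z⁻¹ * G x := mul_le_mul_of_nonneg_left htail (inv_nonneg.mpr hz.le)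
        _ = t * G x := by rw [hzinv]
  exact ⟨fun x => (main x).1, fun x => (main x).2⟩

end S

end Aux

/-- `ρ(P)` is the least `t > 0` admitting a strictly positive
`t`-superharmonic function. -/
theorem specRad_eq_min_superharmonic
    {X : Type*} [Countable X] (p : X → X → ℝ)
    (hnonneg : ∀ x y, 0 ≤ p x y)
    (hstoch : ∀ x, HasSum (p x) 1)
    (hirred : ∀ x y, ∃ k : ℕ, 0 < kpow p k x y) :
    ∀ o : X,
      IsLeast {t : ℝ | 0 < t ∧ ∃ f : X → ℝ, (∀ x, 0 < f x) ∧
          (∀ x, Summable fun y => p x y * f y) ∧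
          (∀ x, (∑' y : X, p x y * f y) ≤ t * f x)}
        (specRad p o) := by
  intro o
  have hρpos : 0 < specRad p o := specRad_pos hnonneg hstoch hirred o
  constructor
  · -- membership: specRad admits a positive superharmonic function
    refine ⟨hρpos, ?_⟩
    -- the approximating sequence of t's
    set ts : ℕ → ℝ := fun j => specRad p o + ((j : ℝ) + 1)⁻¹ with htsdef
    have htj : ∀ j, specRad p o < ts j := fun j =>
      lt_add_of_pos_right _ (by positivity)
    have htpos : ∀ j, 0 < ts j := fun j => lt_trans hρpos (htj j)
    have htle : ∀ j, ts j ≤ specRad p o + 1 := by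
      intro j
      have h1 : ((j : ℝ) + 1)⁻¹ ≤ 1 := by
        rw [inv_le_one_iff₀]
        right; linarith [Nat.cast_nonneg (α := ℝ) j]
      simpa [htsdef] using add_le_add_left h1 (specRad p o)
    have htend : Tendsto ts atTop (𝓝 (specRad p o)) := by
      have h2 : Tendsto (fun j : ℕ => ((j : ℝ) + 1)⁻¹) atTop (𝓝 0) := by
        have := tendsto_one_div_add_atTop_nhds_zero_nat (𝕜 := ℝ)
        simpa [one_div] using this
      simpa using tendsto_const_nhds.add h2
    -- superharmonic functions for each ts j, normalized at o
    have hF : ∀ j, ∃ f : X → ℝ, (∀ x, 0 < f x) ∧ (∀ x, Summable fun y => p x y * f y) ∧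
        (∀ x, (∑' y : X, p x y * f y) ≤ ts j * f x) :=
      fun j => green_superharm hnonneg hstoch hirred o (htj j)
    choose f hfpos hfsum hfineq using hF
    set g : ℕ → X → ℝ := fun j x => f j x / f j o with hgdef
    have hgpos : ∀ j x, 0 < g j x := fun j x => div_pos (hfpos j x) (hfpos j o)
    have hgo : ∀ j, g j o = 1 := fun j => div_self (hfpos j o).ne'
    have hgsum : ∀ j x, Summable fun y => p x y * g j y := by
      intro j x
      have := (hfsum j x).mul_right (f j o)⁻¹
      refine this.congr fun y => ?_
      rw [hgdef]
      simp only []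
      rw [div_eq_mul_inv]
      ring
    have hgineq : ∀ j x, (∑' y, p x y * g j y) ≤ ts j * g j x := by
      intro j x
      have h1 : (fun y => p x y * g j y) = fun y => (p x y * f j y) * (f j o)⁻¹ := by
        funext y
        rw [hgdef]
        simp only []
        rw [div_eq_mul_inv]
        ring
      rw [h1, tsum_mul_right]
      calc (∑' y, p x y * f j y) * (f j o)⁻¹ ≤ (ts j * f j x) * (f j o)⁻¹ :=
            mul_le_mul_of_nonneg_right (hfineq j x) (inv_nonneg.mpr (hfpos j o).le)
        _ = ts j * g j x := by
            rw [hgdef]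
            simp only []
            rw [div_eq_mul_inv]
            ring
    have hiter : ∀ j n x, (Summable fun y => kpow p n x y * g j y) ∧
        (∑' y, kpow p n x y * g j y) ≤ (ts j) ^ n * g j x :=
      fun j n x => superharm_iter hnonneg (htpos j).le (fun x => (hgpos j x).le)
        (hgsum j) (hgineq j) n x
    -- uniform bounds
    choose k hk using fun x => hirred x o
    choose m hm using fun x => hirred o x
    set T := specRad p o + 1 with hTdef
    have hTpos : 0 < T := by rw [hTdef]; linarith
    set c : X → ℝ := fun x => kpow p (k x) x o / T ^ (k x) with hcdef
    set C : X → ℝ := fun x => T ^ (m x) / kpow p (m x) o x with hCdef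
    have hcpos : ∀ x, 0 < c x := fun x => div_pos (hk x) (pow_pos hTpos _)
    have hgc : ∀ j x, c x ≤ g j x := by
      intro j x
      have h1 : kpow p (k x) x o * g j o ≤ (ts j) ^ (k x) * g j x := by
        refine le_trans (Summable.le_tsum (hiter j (k x) x).1 o fun i _ =>
          mul_nonneg (kpow_nonneg hnonneg _ x i) (hgpos j i).le) (hiter j (k x) x).2
      rw [hgo j, mul_one] at h1
      have h2 : kpow p (k x) x o ≤ T ^ (k x) * g j x :=
        le_trans h1 (mul_le_mul_of_nonneg_right
          (pow_le_pow_left₀ (htpos j).le (htle j) _) (hgpos j x).le)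
      rw [hcdef]
      simp only []
      rw [div_le_iff₀ (pow_pos hTpos _)]
      linarith [h2]
    have hgC : ∀ j x, g j x ≤ C x := by
      intro j x
      have h1 : kpow p (m x) o x * g j x ≤ (ts j) ^ (m x) * g j o := by
        refine le_trans (Summable.le_tsum (hiter j (m x) o).1 x fun i _ =>
          mul_nonneg (kpow_nonneg hnonneg _ o i) (hgpos j i).le) (hiter j (m x) o).2
      rw [hgo j, mul_one] at h1
      have h2 : kpow p (m x) o x * g j x ≤ T ^ (m x) :=
        le_trans h1 (pow_le_pow_left₀ (htpos j).le (htle j) _)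
      rw [hCdef]
      simp only []
      rw [le_div_iff₀ (hm x)]
      linarith [h2]
    -- compactness of the product of intervals
    set K : Set (X → ℝ) := Set.univ.pi fun x => Set.Icc (c x) (C x) with hKdef
    have hKcp : IsCompact K := isCompact_univ_pi fun x => isCompact_Icc
    have hgK : ∀ j, g j ∈ K := fun j =>
      Set.mem_univ_pi.mpr fun x => ⟨hgc j x, hgC j x⟩
    obtain ⟨glim, hglimK, φ, hφ, hconv⟩ := hKcp.tendsto_subseq hgK
    have hpt : ∀ x, Tendsto (fun j => g (φ j) x) atTop (𝓝 (glim x)) := by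
      intro x
      exact (tendsto_pi_nhds.mp hconv) x
    have htφ : Tendsto (fun j => ts (φ j)) atTop (𝓝 (specRad p o)) :=
      htend.comp hφ.tendsto_atTop
    have hglimpos : ∀ x, 0 < glim x := fun x =>
      lt_of_lt_of_le (hcpos x) ((Set.mem_univ_pi.mp hglimK) x).1
    have hfin : ∀ x (s : Finset X), (∑ y ∈ s, p x y * glim y) ≤ specRad p o * glim x := by
      intro x s
      have hA : Tendsto (fun j => ∑ y ∈ s, p x y * g (φ j) y) atTop
          (𝓝 (∑ y ∈ s, p x y * glim y)) :=
        tendsto_finset_sum _ fun y _ => tendsto_const_nhds.mul (hpt y)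
      have hB : Tendsto (fun j => ts (φ j) * g (φ j) x) atTop
          (𝓝 (specRad p o * glim x)) := htφ.mul (hpt x)
      refine le_of_tendsto_of_tendsto' hA hB fun j => ?_
      calc ∑ y ∈ s, p x y * g (φ j) y ≤ ∑' y, p x y * g (φ j) y :=
            Summable.sum_le_tsum s (fun y _ => mul_nonneg (hnonneg x y) (hgpos _ y).le)
              (hgsum _ x)
        _ ≤ ts (φ j) * g (φ j) x := hgineq _ x
    have hsumlim : ∀ x, Summable fun y => p x y * glim y := by
      intro x
      exact summable_of_sum_le
        (Pi.le_def.mpr fun y => mul_nonneg (hnonneg x y) (hglimpos y).le) (hfin x)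
    exact ⟨glim, hglimpos, hsumlim, fun x => Summable.tsum_le_of_sum_le (hsumlim x) (hfin x)⟩
  · rintro t ⟨ht, f, hfpos, hsum, hineq⟩
    exact specRad_le_superharm hnonneg hstoch o ht hfpos hsum hineq
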